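/- Let H be a complex Hilbert space, and let 𝒱 and 𝒲 be finite-dimensional subspaces of H with H = 𝒱 ⊕ 𝒲ᗮ; set P = π_{𝒱,𝒲ᗮ} and let ε ≥ 0. Let I be a finite index set, (W,w) a fusion frame for 𝒲 with synthesis operator T_W, (V,v) a fusion frame for 𝒱 with synthesis operator T_V, and Q : K_W → K_V a bounded operator. Then Q is component preserving and ‖T_V Q T_W* − P‖ ≤ ε if and only if there exists a bounded operator L : K_W → H with ‖L T_W* − P‖ ≤ ε, range of L equal to 𝒱, V_i = L(M_i(K_W)) for every i ∈ I, and Q = Q_{L,v}, where (Q_{L,v} f)_i = v_i⁻¹ L(M_i f). Moreover, every bounded L : K_W → H with ‖L T_W* − P‖ ≤ ε and range equal to 𝒱 is of the form L = T_V ∘ Q for some such component preserving Q and fusion frame (V,v) for 𝒱. -/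

import Mathlib

open scoped ENNReal
set_option synthInstance.maxHeartbeats 1000000
set_option maxHeartbeats 1000000
noncomputable section


set_option linter.unusedSectionVars false
section Aux
variable {I : Type*} [Fintype I] [DecidableEq I]
variable {H : Type*} [NormedAddCommGroup H] [NormedSpace ℂ H]
variable {E : I → Submodule ℂ H}

lemma lp_sum_apply (x : I → lp (fun i => (E i : Submodule ℂ H)) 2) (j : I) :
    (∑ i, x i) j = ∑ i, x i j := by
  rw [lp.coeFn_sum]; simp

/-- decomposition of `f` as sum of its coordinate projections -/
lemma lp_decomp (M : I → (lp (fun i => (E i : Submodule ℂ H)) 2 →L[ℂ] lp (fun i => E i) 2))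
    (hM : ∀ (k : I) (g : lp (fun i => (E i : Submodule ℂ H)) 2) (j : I),
      M k g j = if j = k then g j else 0)
    (f : lp (fun i => (E i : Submodule ℂ H)) 2) : ∑ i, M i f = f := by
  apply lp.ext
  funext j
  rw [lp.coeFn_sum]
  simp only [Finset.sum_apply]
  simp only [hM]
  simp

lemma lp_mem_range_M (M : I → (lp (fun i => (E i : Submodule ℂ H)) 2 →L[ℂ] lp (fun i => E i) 2))
    (hM : ∀ (k : I) (g : lp (fun i => (E i : Submodule ℂ H)) 2) (j : I),
      M k g j = if j = k then g j else 0)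
    (i : I) (g : lp (fun i => (E i : Submodule ℂ H)) 2) :
    g ∈ LinearMap.range (M i : lp (fun i => (E i : Submodule ℂ H)) 2 →ₗ[ℂ] lp (fun i => E i) 2) ↔ ∀ j, j ≠ i → g j = 0 := by
  constructor
  · rintro ⟨h, rfl⟩ j hj
    rw [ContinuousLinearMap.coe_coe, hM, if_neg hj]
  · intro hg
    refine ⟨g, ?_⟩
    apply lp.ext; funext j
    rw [ContinuousLinearMap.coe_coe, hM]
    by_cases h : j = i
    · rw [if_pos h]
    · rw [if_neg h, hg j h]

lemma lp_T_eq_sum (c : I → ℝ) (T : lp (fun i => (E i : Submodule ℂ H)) 2 →L[ℂ] H)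
    (hT : ∀ g : lp (fun i => (E i : Submodule ℂ H)) 2,
      HasSum (fun i => (c i : ℂ) • (g i : H)) (T g))
    (g : lp (fun i => (E i : Submodule ℂ H)) 2) :
    T g = ∑ i, (c i : ℂ) • (g i : H) :=
  (hT g).unique (hasSum_fintype _)

lemma lp_T_single (c : I → ℝ) (T : lp (fun i => (E i : Submodule ℂ H)) 2 →L[ℂ] H)
    (hT : ∀ g : lp (fun i => (E i : Submodule ℂ H)) 2,
      HasSum (fun i => (c i : ℂ) • (g i : H)) (T g))
    (i : I) (g : lp (fun i => (E i : Submodule ℂ H)) 2) (hg : ∀ j, j ≠ i → g j = 0) :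
    T g = (c i : ℂ) • (g i : H) := by
  rw [lp_T_eq_sum c T hT g]
  refine Finset.sum_eq_single i (fun j _ hj => ?_) (by simp)
  rw [hg j hj]
  simp


/-- evaluation at a coordinate as a continuous linear map -/
def lpEvalSub (E : I → Submodule ℂ H) (i : I) :
    lp (fun j => (E j : Submodule ℂ H)) 2 →L[ℂ] E i :=
  LinearMap.mkContinuous
    { toFun := fun g => g i
      map_add' := fun g h => by
        have := congrFun (lp.coeFn_add g h) i
        simpa using this
      map_smul' := fun c g => by
        have := congrFun (lp.coeFn_smul c g) i
        simpa using this }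
    1 (fun g => by
      rw [one_mul]; exact lp.norm_apply_le_norm (by norm_num : (2 : ℝ≥0∞) ≠ 0) g i)

@[simp] lemma lpEvalSub_apply (E : I → Submodule ℂ H) (i : I)
    (g : lp (fun j => (E j : Submodule ℂ H)) 2) : lpEvalSub E i g = g i := rfl

/-- `lp.single` as a continuous linear map -/
def lpSingleCLM (E : I → Submodule ℂ H) (i : I) :
    E i →L[ℂ] lp (fun j => (E j : Submodule ℂ H)) 2 :=
  LinearMap.mkContinuous
    { toFun := fun a => lp.single 2 i a
      map_add' := fun a b => by
        apply lp.ext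
        funext j
        rw [lp.coeFn_add]
        by_cases h : j = i
        · subst h
          simp [lp.single_apply_self]
        · simp [lp.single_apply_ne 2 i _ h]
      map_smul' := fun c a => by
        simpa using lp.single_smul 2 i a c }
    1 (fun a => by
      have h2 : 0 < (2 : ℝ≥0∞).toReal := by norm_num
      have := lp.norm_single (E := fun j => (E j : Submodule ℂ H)) (p := 2) (by norm_num) i a
      rw [one_mul]; exact this.le)

lemma lpSingleCLM_coe (E : I → Submodule ℂ H) (i : I) (a : E i) :
    lpSingleCLM E i a = lp.single (E := fun j => (E j : Submodule ℂ H)) 2 i a := rfl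

lemma lpSingleCLM_apply_self (E : I → Submodule ℂ H) (i : I) (a : E i) :
    lpSingleCLM E i a i = a := by
  rw [lpSingleCLM_coe]
  exact lp.single_apply_self (E := fun j => (E j : Submodule ℂ H)) 2 i a

lemma lpSingleCLM_apply_ne (E : I → Submodule ℂ H) (i : I) (a : E i) {j : I} (h : j ≠ i) :
    lpSingleCLM E i a j = 0 := by
  rw [lpSingleCLM_coe]
  exact lp.single_apply_ne (E := fun j => (E j : Submodule ℂ H)) 2 i a h

/-- coordinate projection as a continuous linear map -/
def lpProj (E : I → Submodule ℂ H) (i : I) :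
    lp (fun j => (E j : Submodule ℂ H)) 2 →L[ℂ] lp (fun j => E j) 2 :=
  (lpSingleCLM E i) ∘L (lpEvalSub E i)

lemma lpProj_apply (E : I → Submodule ℂ H) (k : I)
    (g : lp (fun j => (E j : Submodule ℂ H)) 2) (j : I) :
    lpProj E k g j = if j = k then g j else 0 := by
  by_cases h : j = k
  · subst h
    rw [if_pos rfl]
    exact lpSingleCLM_apply_self E j (g j)
  · rw [if_neg h]
    exact lpSingleCLM_apply_ne E k _ h


lemma lp_M_ne (M : I → (lp (fun i => (E i : Submodule ℂ H)) 2 →L[ℂ] lp (fun i => E i) 2))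
    (hM : ∀ (k : I) (g : lp (fun i => (E i : Submodule ℂ H)) 2) (j : I),
      M k g j = if j = k then g j else 0)
    {i j : I} (h : j ≠ i) (f : lp (fun i => (E i : Submodule ℂ H)) 2) :
    M j (M i f) = 0 := by
  apply lp.ext; funext k
  rw [lp.coeFn_zero, Pi.zero_apply, hM]
  by_cases hk : k = j
  · rw [if_pos hk, hM, if_neg (by rw [hk]; exact h)]
  · rw [if_neg hk]

lemma lp_M_idem (M : I → (lp (fun i => (E i : Submodule ℂ H)) 2 →L[ℂ] lp (fun i => E i) 2))
    (hM : ∀ (k : I) (g : lp (fun i => (E i : Submodule ℂ H)) 2) (j : I),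
      M k g j = if j = k then g j else 0)
    (i : I) (f : lp (fun i => (E i : Submodule ℂ H)) 2) :
    M i (M i f) = M i f := by
  apply lp.ext; funext k
  rw [hM, hM]
  by_cases hk : k = i <;> simp [hk]

/-- The main characterization, with the analysis operator generalized to an arbitrary `S`. -/
lemma aux_main
    (𝒱 : Submodule ℂ H) (P : H →L[ℂ] H) (ε : ℝ)
    {W : I → Submodule ℂ H}
    (MW : I → (lp (fun i => W i) 2 →L[ℂ] lp (fun i => W i) 2))
    (hMW : ∀ (k : I) (g : lp (fun i => W i) 2) (j : I), MW k g j = if j = k then g j else 0)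
    (S : H →L[ℂ] lp (fun i => W i) 2)
    {V : I → Submodule ℂ H}
    (v : I → ℝ) (hv : ∀ i, 0 < v i)
    (TV : lp (fun i => V i) 2 →L[ℂ] H)
    (hTV : ∀ g : lp (fun i => V i) 2, HasSum (fun i => (v i : ℂ) • (g i : H)) (TV g))
    (hVfr : LinearMap.range (TV : lp (fun i => V i) 2 →ₗ[ℂ] H) = 𝒱)
    (MV : I → (lp (fun i => V i) 2 →L[ℂ] lp (fun i => V i) 2))
    (hMV : ∀ (k : I) (g : lp (fun i => V i) 2) (j : I), MV k g j = if j = k then g j else 0)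
    (Q : lp (fun i => W i) 2 →L[ℂ] lp (fun i => V i) 2) :
    ((∀ i, LinearMap.range (Q ∘L MW i : lp (fun i => W i) 2 →ₗ[ℂ] lp (fun i => V i) 2) = LinearMap.range (MV i : lp (fun i => V i) 2 →ₗ[ℂ] lp (fun i => V i) 2)) ∧
        ‖TV ∘L Q ∘L S - P‖ ≤ ε) ↔
      (∃ L : lp (fun i => W i) 2 →L[ℂ] H,
        ‖L ∘L S - P‖ ≤ ε ∧
        LinearMap.range (L : lp (fun i => W i) 2 →ₗ[ℂ] H) = 𝒱 ∧
        (∀ i, V i = LinearMap.range (L ∘L MW i : lp (fun i => W i) 2 →ₗ[ℂ] H)) ∧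
        (∀ (f : lp (fun i => W i) 2) (i : I), (Q f i : H) = ((v i : ℂ))⁻¹ • L (MW i f))) := by
  have hne : ∀ i, (v i : ℂ) ≠ 0 := fun i => by
    exact_mod_cast Complex.ofReal_ne_zero.mpr (hv i).ne'
  constructor
  · rintro ⟨hcp, hnorm⟩
    have hQsupp : ∀ (i : I) (f : lp (fun i => W i) 2) (j : I), j ≠ i → Q (MW i f) j = 0 := by
      intro i f j hj
      have hm : Q (MW i f) ∈ LinearMap.range (MV i : lp (fun i => V i) 2 →ₗ[ℂ] lp (fun i => V i) 2) := by
        rw [← hcp i]; exact ⟨f, rfl⟩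
      exact (lp_mem_range_M MV hMV i _).1 hm j hj
    have hQcoord : ∀ (f : lp (fun i => W i) 2) (i : I), Q f i = Q (MW i f) i := by
      intro f i
      conv_lhs => rw [← lp_decomp MW hMW f]
      rw [map_sum, lp_sum_apply]
      exact Finset.sum_eq_single i
        (fun j _ hj => hQsupp j f i (Ne.symm hj)) (by simp)
    have hL : ∀ (f : lp (fun i => W i) 2) (i : I),
        TV (Q (MW i f)) = (v i : ℂ) • (Q f i : H) := by
      intro f i
      rw [lp_T_single v TV hTV i _ (hQsupp i f), hQcoord f i]
    refine ⟨TV ∘L Q, ?_, ?_, ?_, ?_⟩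
    · rwa [ContinuousLinearMap.comp_assoc]
    · apply le_antisymm
      · rintro x ⟨f, rfl⟩
        rw [← hVfr]
        exact ⟨Q f, rfl⟩
      · rw [← hVfr]
        rintro x ⟨g, rfl⟩
        have hg : g ∈ LinearMap.range (Q : lp (fun i => W i) 2 →ₗ[ℂ] lp (fun i => V i) 2) := by
          rw [← lp_decomp MV hMV g]
          apply Submodule.sum_mem
          intro i _
          have : MV i g ∈ LinearMap.range (Q ∘L MW i : lp (fun i => W i) 2 →ₗ[ℂ] lp (fun i => V i) 2) := by
            rw [hcp i]; exact ⟨g, rfl⟩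
          obtain ⟨f, hf⟩ := this
          exact ⟨MW i f, hf⟩
        obtain ⟨f, rfl⟩ := hg
        exact ⟨f, rfl⟩
    · intro i
      apply le_antisymm
      · intro x hx
        set a : V i := ⟨((v i : ℂ))⁻¹ • x, (V i).smul_mem _ hx⟩ with ha
        have hmem : lpSingleCLM V i a ∈ LinearMap.range (MV i : lp (fun i => V i) 2 →ₗ[ℂ] lp (fun i => V i) 2) :=
          (lp_mem_range_M MV hMV i _).2 (fun j hj => lpSingleCLM_apply_ne V i a hj)
        rw [← hcp i] at hmem
        obtain ⟨f, hf⟩ := hmem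
        refine ⟨f, ?_⟩
        show TV (Q (MW i f)) = x
        have hf' : Q (MW i f) = lpSingleCLM V i a := hf
        rw [hf', lp_T_single v TV hTV i _ (fun j hj => lpSingleCLM_apply_ne V i a hj),
          lpSingleCLM_apply_self]
        show (v i : ℂ) • ((v i : ℂ))⁻¹ • x = x
        rw [smul_inv_smul₀ (hne i)]
      · rintro x ⟨f, rfl⟩
        show TV (Q (MW i f)) ∈ V i
        rw [lp_T_single v TV hTV i _ (hQsupp i f)]
        exact (V i).smul_mem _ (Q (MW i f) i).2
    · intro f i
      show (Q f i : H) = ((v i : ℂ))⁻¹ • TV (Q (MW i f))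
      rw [hL f i, inv_smul_smul₀ (hne i)]
  · rintro ⟨L, hLn, hLr, hLV, hQL⟩
    have hTVQ : TV ∘L Q = L := by
      ext f
      show TV (Q f) = L f
      rw [lp_T_eq_sum v TV hTV]
      calc ∑ i, (v i : ℂ) • (Q f i : H) = ∑ i, L (MW i f) := by
            refine Finset.sum_congr rfl (fun i _ => ?_)
            rw [hQL f i, smul_inv_smul₀ (hne i)]
        _ = L (∑ i, MW i f) := by rw [map_sum]
        _ = L f := by rw [lp_decomp MW hMW]
    have hQz : ∀ (i : I) (f : lp (fun i => W i) 2) (j : I), j ≠ i →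
        Q (MW i f) j = 0 := by
      intro i f j hj
      have : (Q (MW i f) j : H) = 0 := by
        rw [hQL, lp_M_ne MW hMW hj, map_zero, smul_zero]
      exact Subtype.coe_injective (by simpa using this)
    refine ⟨?_, ?_⟩
    · intro i
      apply le_antisymm
      · rintro x ⟨f, rfl⟩
        exact (lp_mem_range_M MV hMV i _).2 (hQz i f)
      · intro g hg
        have hsupp := (lp_mem_range_M MV hMV i g).1 hg
        have hgi : (g i : H) ∈ LinearMap.range (L ∘L MW i : lp (fun i => W i) 2 →ₗ[ℂ] H) := by
          rw [← hLV i]; exact (g i).2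
        obtain ⟨f, hf⟩ := hgi
        refine ⟨(v i : ℂ) • f, ?_⟩
        show Q (MW i ((v i : ℂ) • f)) = g
        apply lp.ext; funext j
        by_cases hji : j = i
        · subst hji
          apply Subtype.coe_injective
          show ((Q (MW j ((v j : ℂ) • f)) j : H)) = ((g j : H))
          rw [hQL, lp_M_idem MW hMW, map_smul, map_smul, inv_smul_smul₀ (hne j)]
          exact hf
        · rw [hQz i _ j hji, hsupp j hji]
    · rw [← ContinuousLinearMap.comp_assoc, hTVQ]
      exact hLn

end Aux

/-- Finite-dimensional characterization: `(V,v)` is an `ε`-approximate oblique component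
preserving `Q`-dual fusion frame of `(W,w)` on `𝒱` iff `Q = Q_{L,v}` and `V_i = L(M_i(K_W))`
for some `ε`-approximate oblique left inverse `L` of `T_W*` with range `𝒱`; moreover every
such `L` is of the form `T_V ∘ Q`. -/
theorem approx_componentPreserving_dual_characterization
    {H : Type*} [NormedAddCommGroup H] [InnerProductSpace ℂ H] [CompleteSpace H]
    {I : Type*} [Fintype I] [DecidableEq I]
    (𝒱 𝒲 : Submodule ℂ H) [CompleteSpace 𝒱] [CompleteSpace 𝒲]
    [FiniteDimensional ℂ 𝒱] [FiniteDimensional ℂ 𝒲]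
    (P : H →L[ℂ] H) (hPidem : P ∘L P = P)
    (hPran : LinearMap.range (P : H →ₗ[ℂ] H) = 𝒱) (hPker : LinearMap.ker (P : H →ₗ[ℂ] H) = 𝒲ᗮ)
    (ε : ℝ) (hε : 0 ≤ ε)
    (W : I → Submodule ℂ H) [∀ i, CompleteSpace (W i)] (hW : ∀ i, W i ≤ 𝒲)
    (w : I → ℝ) (hw : ∀ i, 0 < w i)
    (TW : lp (fun i => W i) 2 →L[ℂ] H)
    (hTW : ∀ g : lp (fun i => W i) 2, HasSum (fun i => (w i : ℂ) • (g i : H)) (TW g))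
    (hWfr : LinearMap.range (TW : lp (fun i => W i) 2 →ₗ[ℂ] H) = 𝒲)
    (MW : I → (lp (fun i => W i) 2 →L[ℂ] lp (fun i => W i) 2))
    (hMW : ∀ (k : I) (g : lp (fun i => W i) 2) (j : I), MW k g j = if j = k then g j else 0)
    (V : I → Submodule ℂ H) [∀ i, CompleteSpace (V i)] (hV : ∀ i, V i ≤ 𝒱)
    (v : I → ℝ) (hv : ∀ i, 0 < v i)
    (TV : lp (fun i => V i) 2 →L[ℂ] H)
    (hTV : ∀ g : lp (fun i => V i) 2, HasSum (fun i => (v i : ℂ) • (g i : H)) (TV g))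
    (hVfr : LinearMap.range (TV : lp (fun i => V i) 2 →ₗ[ℂ] H) = 𝒱)
    (MV : I → (lp (fun i => V i) 2 →L[ℂ] lp (fun i => V i) 2))
    (hMV : ∀ (k : I) (g : lp (fun i => V i) 2) (j : I), MV k g j = if j = k then g j else 0)
    (Q : lp (fun i => W i) 2 →L[ℂ] lp (fun i => V i) 2) :
    -- first part: the characterization of approximate oblique component preserving duals
    (((∀ i, LinearMap.range (Q ∘L MW i : lp (fun i => W i) 2 →ₗ[ℂ] lp (fun i => V i) 2) = LinearMap.range (MV i : lp (fun i => V i) 2 →ₗ[ℂ] lp (fun i => V i) 2)) ∧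
        ‖TV ∘L Q ∘L ContinuousLinearMap.adjoint TW - P‖ ≤ ε) ↔
      (∃ L : lp (fun i => W i) 2 →L[ℂ] H,
        ‖L ∘L ContinuousLinearMap.adjoint TW - P‖ ≤ ε ∧
        LinearMap.range (L : lp (fun i => W i) 2 →ₗ[ℂ] H) = 𝒱 ∧
        (∀ i, V i = LinearMap.range (L ∘L MW i : lp (fun i => W i) 2 →ₗ[ℂ] H)) ∧
        (∀ (f : lp (fun i => W i) 2) (i : I), (Q f i : H) = ((v i : ℂ))⁻¹ • L (MW i f)))) ∧
    -- second part: every approximate oblique left inverse with range 𝒱 arises this way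
    (∀ L : lp (fun i => W i) 2 →L[ℂ] H,
      ‖L ∘L ContinuousLinearMap.adjoint TW - P‖ ≤ ε →
      LinearMap.range (L : lp (fun i => W i) 2 →ₗ[ℂ] H) = 𝒱 →
      ∃ (V' : I → Submodule ℂ H) (v' : I → ℝ),
        (∀ i, 0 < v' i) ∧ (∀ i, V' i ≤ 𝒱) ∧
        ∃ (TV' : lp (fun i => V' i) 2 →L[ℂ] H),
          (∀ g : lp (fun i => V' i) 2,
            HasSum (fun i => (v' i : ℂ) • (g i : H)) (TV' g)) ∧
          LinearMap.range (TV' : lp (fun i => V' i) 2 →ₗ[ℂ] H) = 𝒱 ∧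
          ∃ (MV' : I → (lp (fun i => V' i) 2 →L[ℂ] lp (fun i => V' i) 2)),
            (∀ (k : I) (g : lp (fun i => V' i) 2) (j : I),
              MV' k g j = if j = k then g j else 0) ∧
            ∃ (Q' : lp (fun i => W i) 2 →L[ℂ] lp (fun i => V' i) 2),
              (∀ i, LinearMap.range (Q' ∘L MW i : lp (fun i => W i) 2 →ₗ[ℂ] lp (fun i => V' i) 2) = LinearMap.range (MV' i : lp (fun i => V' i) 2 →ₗ[ℂ] lp (fun i => V' i) 2)) ∧
              ‖TV' ∘L Q' ∘L ContinuousLinearMap.adjoint TW - P‖ ≤ ε ∧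
              TV' ∘L Q' = L) := by
  refine ⟨aux_main 𝒱 P ε MW hMW (ContinuousLinearMap.adjoint TW) v hv TV hTV hVfr MV hMV Q,
    ?_⟩
  intro L hLn hLr
  set V' : I → Submodule ℂ H := fun i => LinearMap.range (L ∘L MW i : lp (fun i => W i) 2 →ₗ[ℂ] H) with hV'def
  have hV'le : ∀ i, V' i ≤ 𝒱 := by
    rintro i x ⟨f, rfl⟩
    rw [← hLr]
    exact ⟨MW i f, rfl⟩
  set TV' : lp (fun i => (V' i : Submodule ℂ H)) 2 →L[ℂ] H :=
    ∑ i, (V' i).subtypeL ∘L lpEvalSub V' i with hTV'def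
  have hTV'app : ∀ g : lp (fun i => (V' i : Submodule ℂ H)) 2, TV' g = ∑ i, (g i : H) := by
    intro g
    rw [hTV'def, ContinuousLinearMap.sum_apply]
    rfl
  have hTV'sum : ∀ g : lp (fun i => (V' i : Submodule ℂ H)) 2,
      HasSum (fun i => (((1:ℝ) : ℂ)) • (g i : H)) (TV' g) := by
    intro g
    rw [hTV'app]
    simpa using (hasSum_fintype (fun i => (g i : H)))
  set Q' : lp (fun i => W i) 2 →L[ℂ] lp (fun i => (V' i : Submodule ℂ H)) 2 :=
    ∑ i, (lpSingleCLM V' i) ∘L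
      ((L ∘L MW i).codRestrict (V' i) (fun f => ⟨f, rfl⟩)) with hQ'def
  have hQ'coe : ∀ (f : lp (fun i => W i) 2) (j : I), (Q' f j : H) = L (MW j f) := by
    intro f j
    have h1 : Q' f j = ∑ i, (lpSingleCLM V' i
        (((L ∘L MW i).codRestrict (V' i) (fun f => ⟨f, rfl⟩)) f)) j := by
      rw [hQ'def, ContinuousLinearMap.sum_apply, lp_sum_apply]
      rfl
    have h2 : (∑ i, (lpSingleCLM V' i
        (((L ∘L MW i).codRestrict (V' i) (fun f => ⟨f, rfl⟩)) f)) j : V' j)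
        = ((L ∘L MW j).codRestrict (V' j) (fun f => ⟨f, rfl⟩)) f := by
      rw [Finset.sum_eq_single j
        (fun i _ hij => lpSingleCLM_apply_ne V' i _ (Ne.symm hij)) (by simp)]
      exact lpSingleCLM_apply_self V' j _
    rw [h1, h2]
    rfl
  have hTV'Q' : TV' ∘L Q' = L := by
    ext f
    show TV' (Q' f) = L f
    rw [hTV'app]
    calc ∑ j, (Q' f j : H) = ∑ j, L (MW j f) :=
          Finset.sum_congr rfl (fun j _ => hQ'coe f j)
      _ = L (∑ j, MW j f) := by rw [map_sum]
      _ = L f := by rw [lp_decomp MW hMW]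
  have hV'fr : LinearMap.range (TV' : lp (fun i => (V' i : Submodule ℂ H)) 2 →ₗ[ℂ] H) = 𝒱 := by
    apply le_antisymm
    · rintro x ⟨g, rfl⟩
      rw [ContinuousLinearMap.coe_coe, hTV'app]
      exact Submodule.sum_mem _ (fun i _ => hV'le i (g i).2)
    · rw [← hLr]
      rintro x ⟨f, rfl⟩
      exact ⟨Q' f, by rw [← hTV'Q']; rfl⟩
  have hmain := (aux_main 𝒱 P ε MW hMW (ContinuousLinearMap.adjoint TW)
      (fun _ => (1:ℝ)) (fun _ => one_pos) TV' hTV'sum hV'fr (lpProj V')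
      (lpProj_apply V') Q').mpr
    ⟨L, hLn, hLr, fun i => rfl, fun f i => by rw [hQ'coe]; simp⟩
  exact ⟨V', fun _ => 1, fun _ => one_pos, hV'le, TV', hTV'sum, hV'fr, lpProj V',
    lpProj_apply V', Q', hmain.1, hmain.2, hTV'Q'⟩
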